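/- Let R be a standard graded Noetherian ring with R_0 = A, and let X = ⨁_n X_n be a graded R-module with each X_n a finitely generated A-module, X_n = 0 for n ≪ 0, and such that H⁰_{R₊}(X)_n = 0 for all n ≫ 0 (X is quasi-finite). Then Ass_A X_n ⊆ Ass_A X_{n+1} for all n ≫ 0. -/

import Mathlib

/-- The `I`-torsion submodule `H⁰_I(X) = { x | I^k x = 0 for some k }`. -/
def H0 {R : Type} [CommRing R] (I : Ideal R) (X : Type) [AddCommGroup X] [Module R X] :
    Submodule R X :=
  ⨆ k : ℕ, Submodule.torsionBySet R X ((I ^ k : Ideal R) : Set R)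

/-- Let `R` be a standard graded Noetherian ring with `R_0 = A` and `X = ⨁ X_n` a graded
`R`-module with finitely generated components vanishing in low degrees, which is
quasi-finite: `H⁰_{R₊}(X)_n = 0` for all `n ≫ 0`.  Then `Ass_A X_n ⊆ Ass_A X_{n+1}`
for all `n ≫ 0`. -/
theorem stmt2 (A : Type) [CommRing A] [IsNoetherianRing A]
    (R : Type) [CommRing R] [Algebra A R] [IsNoetherianRing R]
    (𝒜 : ℕ → Submodule A R) [GradedAlgebra 𝒜] (hstd : ∀ n, 𝒜 n = 𝒜 1 ^ n)
    (X : Type) [AddCommGroup X] [Module A X] [Module R X] [IsScalarTower A R X]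
    (ℳ : ℤ → Submodule A X) [DirectSum.Decomposition ℳ]
    (hsmul : ∀ (i : ℕ) (n : ℤ), ∀ r ∈ 𝒜 i, ∀ x ∈ ℳ n, r • x ∈ ℳ (n + i))
    (hfg : ∀ n, (ℳ n).FG) (hvan : ∃ n₀ : ℤ, ∀ n < n₀, ℳ n = ⊥)
    (hqf : ∃ N : ℤ, ∀ n ≥ N,
      (H0 (Ideal.span (𝒜 1 : Set R)) X).restrictScalars A ⊓ ℳ n = ⊥) :
    ∃ N : ℤ, ∀ n ≥ N, associatedPrimes A (ℳ n) ⊆ associatedPrimes A (ℳ (n + 1)) := by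
  classical
  obtain ⟨N, hN⟩ := hqf
  refine ⟨N, fun n hn p hp => ?_⟩
  obtain ⟨hprime, x, hx⟩ := isAssociatedPrime_iff.1 hp
  have hxmem : (x : X) ∈ ℳ n := x.2
  -- annihilator characterization of p
  have hann : ∀ a : A, a • (x : X) = 0 ↔ a ∈ p := by
    intro a
    rw [hx, Submodule.mem_colon_singleton, Submodule.mem_bot]
    constructor
    · intro h; exact Subtype.ext h
    · intro h; exact congrArg Subtype.val h
  -- commutation of A- and R-scalars
  have hcomm : ∀ (a : A) (r : R) (y : X), a • (r • y) = r • (a • y) := by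
    intro a r y
    rw [← smul_assoc, Algebra.smul_def, mul_comm, ← smul_eq_mul, smul_assoc,
      algebraMap_smul]
  -- the submodule T = R₁ • x
  set T : Submodule A X := Submodule.span A ((fun r : R => r • (x : X)) '' (𝒜 1 : Set R))
    with hTdef
  have hT_le : T ≤ ℳ (n + 1) := by
    rw [Submodule.span_le]
    rintro _ ⟨r, hr, rfl⟩
    simpa using hsmul 1 n r hr (x : X) hxmem
  -- any a killing all of R₁ • x lies in p
  have hJ : ∀ a : A, (∀ r ∈ 𝒜 1, a • (r • (x : X)) = 0) → a ∈ p := by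
    intro a ha
    by_contra hap
    have hax0 : a • (x : X) ≠ 0 := fun h => hap ((hann a).1 h)
    have hH0 : a • (x : X) ∈ H0 (Ideal.span ((𝒜 1 : Submodule A R) : Set R)) X := by
      refine Submodule.mem_iSup_of_mem 1 ?_
      rw [pow_one, Submodule.mem_torsionBySet_iff]
      rintro ⟨r, hr⟩
      refine Submodule.span_induction (p := fun r _ => r • (a • (x : X)) = 0)
        ?_ ?_ ?_ ?_ hr
      · intro s hs
        rw [← hcomm]
        exact ha s hs
      · simp
      · intro s t _ _ h1 h2
        rw [add_smul, h1, h2, add_zero]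
      · intro c s _ h1
        rw [smul_eq_mul, mul_smul, h1, smul_zero]
    have : a • (x : X) ∈ (H0 (Ideal.span ((𝒜 1 : Submodule A R) : Set R)) X).restrictScalars A
        ⊓ ℳ n := ⟨hH0, Submodule.smul_mem _ a hxmem⟩
    rw [hN n hn] at this
    exact hax0 this
  -- p kills T
  have hpT : ∀ t ∈ T, ∀ b ∈ p, b • t = 0 := by
    intro t ht b hb
    refine Submodule.span_induction (p := fun t _ => b • t = 0) ?_ ?_ ?_ ?_ ht
    · rintro _ ⟨r, hr, rfl⟩
      rw [hcomm, (hann b).2 hb, smul_zero]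
    · simp
    · intro s t _ _ h1 h2; rw [smul_add, h1, h2, add_zero]
    · intro c s _ h1; rw [smul_comm, h1, smul_zero]
  -- T is finitely generated
  have hTfg : T.FG := by
    have hnoeth : IsNoetherian A (ℳ (n + 1)) :=
      isNoetherian_of_fg_of_noetherian _ (hfg (n + 1))
    have : T = Submodule.map (ℳ (n + 1)).subtype
        (T.comap (ℳ (n + 1)).subtype) := by
      rw [Submodule.map_comap_eq, Submodule.range_subtype, inf_eq_right.2 hT_le]
    rw [this]
    exact Submodule.FG.map _ (IsNoetherian.noetherian _)
  -- find t ∈ T with annihilator exactly p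
  have key : ∃ t : X, t ∈ T ∧ ∀ a : A, a • t = 0 → a ∈ p := by
    by_contra h
    push_neg at h
    obtain ⟨s, hs⟩ := hTfg
    have hgen : ∀ t ∈ s, ∃ a : A, a • t = 0 ∧ a ∉ p := by
      intro t ht
      have htT : t ∈ T := by rw [← hs]; exact Submodule.subset_span ht
      obtain ⟨a, ha1, ha2⟩ := h t htT
      exact ⟨a, ha1, ha2⟩
    choose! g hg1 hg2 using hgen
    set a : A := ∏ t ∈ s, g t with hadef
    have ha_not : a ∉ p := by
      intro hmem
      obtain ⟨t, ht, htp⟩ := (Ideal.IsPrime.prod_mem_iff).1 hmem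
      exact hg2 t ht htp
    have ha_kill : ∀ t ∈ T, a • t = 0 := by
      intro t ht
      rw [← hs] at ht
      refine Submodule.span_induction (p := fun t _ => a • t = 0) ?_ ?_ ?_ ?_ ht
      · intro u hu
        have : a = (∏ v ∈ s.erase u, g v) * g u := by
          rw [mul_comm, Finset.mul_prod_erase s g hu]
        rw [this, mul_smul, hg1 u hu, smul_zero]
      · simp
      · intro y z _ _ h1 h2; rw [smul_add, h1, h2, add_zero]
      · intro c y _ h1; rw [smul_comm, h1, smul_zero]
    have : a ∈ p := by
      refine hJ a fun r hr => ?_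
      exact ha_kill _ (Submodule.subset_span ⟨r, hr, rfl⟩)
    exact ha_not this
  obtain ⟨t, htT, htp⟩ := key
  refine isAssociatedPrime_iff.2 ⟨hprime, ⟨t, hT_le htT⟩, ?_⟩
  ext a
  rw [Submodule.mem_colon_singleton, Submodule.mem_bot]
  constructor
  · intro ha
    exact Subtype.ext (hpT t htT a ha)
  · intro ha
    exact htp a (congrArg Subtype.val ha)
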